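/- Let n, m, p, q ∈ ℕ, let H be a symmetric positive definite (n+m)×(n+m) real matrix, let a₁,…,a_p ∈ ℝⁿ⁺ᵐ, b₁,…,b_q ∈ ℝⁿ⁺ᵐ, let C be a real m×(n+m) matrix, and write a_j^y ∈ ℝᵐ for the last m components of a_j. Let τ_j, θ_j > 0 and γ_j, κ_j < 0 for j = 1,…,p, and α_j > 0, β_j < 0 for j = 1,…,q, and let λ satisfy 0 < λ < (κ_j/θ_j)·(τ_j/γ_j) for all j = 1,…,p. Then for any d₁ ∈ ℝⁿ⁺ᵐ, d₂, d₄ ∈ ℝ^p, d₃ ∈ ℝ^q satisfying H d₁ + Σⱼ d₂ⱼ aⱼ + Σⱼ d₃ⱼ bⱼ − λ Σⱼ d₄ⱼ aⱼ = 0; τ_j ⟨a_j, d₁⟩ + γ_j d₂ⱼ = 0 for all j ≤ p; α_j ⟨b_j, d₁⟩ + β_j d₃ⱼ = 0 for all j ≤ q; θ_j ⟨a_j, d₁⟩ + κ_j d₄ⱼ = 0 for all j ≤ p; and C d₁ + Σⱼ d₄ⱼ a_j^y = 0, one has d₁ = 0, d₂ = 0, d₃ = 0 and d₄ = 0. -/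

import Mathlib

/-- Linear-algebraic content of Theorem 4.2: at a zero of the smoothed system, with
`H = ∇²L^λ(z̄)` positive definite, smoothed Fischer–Burmeister coefficients of the
appropriate signs, and `0 < λ < (κ_j/θ_j)(τ_j/γ_j)` for all `j`, the columns of the
Jacobian `∇Υ^λ_μ(z̄)` are linearly independent: the homogeneous system only has the
trivial solution. -/
theorem smoothed_jacobian_columns_linearly_independent
    (n m p q : ℕ) (lam : ℝ)
    (H : Matrix (Fin (n + m)) (Fin (n + m)) ℝ) (hH : H.PosDef)
    (a : Fin p → Fin (n + m) → ℝ) (b : Fin q → Fin (n + m) → ℝ)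
    (C : Matrix (Fin m) (Fin (n + m)) ℝ)
    (τ γ θ κ : Fin p → ℝ) (α β : Fin q → ℝ)
    (hτ : ∀ j, 0 < τ j) (hθ : ∀ j, 0 < θ j)
    (hγ : ∀ j, γ j < 0) (hκ : ∀ j, κ j < 0)
    (hα : ∀ j, 0 < α j) (hβ : ∀ j, β j < 0)
    (hlam0 : 0 < lam) (hlam : ∀ j, lam < (κ j / θ j) * (τ j / γ j))
    (d₁ : Fin (n + m) → ℝ) (d₂ d₄ : Fin p → ℝ) (d₃ : Fin q → ℝ)
    (h1 : H.mulVec d₁ + ∑ j, d₂ j • a j + ∑ j, d₃ j • b j - lam • ∑ j, d₄ j • a j = 0)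
    (h2 : ∀ j, τ j * (∑ k, a j k * d₁ k) + γ j * d₂ j = 0)
    (h3 : ∀ j, α j * (∑ k, b j k * d₁ k) + β j * d₃ j = 0)
    (h4 : ∀ j, θ j * (∑ k, a j k * d₁ k) + κ j * d₄ j = 0)
    (h5 : C.mulVec d₁ + ∑ j, d₄ j • (fun k : Fin m => a j (Fin.natAdd n k)) = 0) :
    d₁ = 0 ∧ d₂ = 0 ∧ d₃ = 0 ∧ d₄ = 0 := by
  have key : dotProduct (H.mulVec d₁) d₁
      + ∑ j, d₂ j * (∑ k, a j k * d₁ k)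
      + ∑ j, d₃ j * (∑ k, b j k * d₁ k)
      - lam * ∑ j, d₄ j * (∑ k, a j k * d₁ k) = 0 := by
    have h := congrArg (fun v => dotProduct v d₁) h1
    simp only [dotProduct, Pi.add_apply, Pi.sub_apply, Pi.smul_apply,
      Finset.sum_apply, smul_eq_mul, add_mul, sub_mul, Finset.sum_mul,
      Finset.sum_add_distrib, Finset.sum_sub_distrib, Pi.zero_apply, zero_mul,
      Finset.sum_const_zero, Finset.mul_sum, mul_assoc] at h
    have swap : ∀ (J : ℕ) (f : Fin (n + m) → Fin J → ℝ),
        ∑ x, ∑ y, f x y = ∑ y, ∑ x, f x y := fun _ _ => Finset.sum_comm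
    rw [swap p, swap q, swap p] at h
    simpa [dotProduct, Finset.mul_sum, mul_assoc] using h
  set s : Fin p → ℝ := fun j => ∑ k, a j k * d₁ k with hs
  set t : Fin q → ℝ := fun j => ∑ k, b j k * d₁ k with ht
  have hterm : ∀ j, 0 ≤ d₂ j * s j - lam * (d₄ j * s j) := by
    intro j
    have hγ0 : γ j ≠ 0 := ne_of_lt (hγ j)
    have hκ0 : κ j ≠ 0 := ne_of_lt (hκ j)
    have e2 : τ j * s j + γ j * d₂ j = 0 := h2 j
    have e4 : θ j * s j + κ j * d₄ j = 0 := h4 j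
    have hd2 : d₂ j = (-(τ j * s j)) / γ j := by rw [eq_div_iff hγ0]; linarith
    have hd4 : d₄ j = (-(θ j * s j)) / κ j := by rw [eq_div_iff hκ0]; linarith
    have hlam' : κ j * τ j < lam * (θ j * γ j) := by
      have h := hlam j
      rw [div_mul_div_comm] at h
      have hneg : θ j * γ j < 0 := mul_neg_of_pos_of_neg (hθ j) (hγ j)
      rw [lt_div_iff_of_neg hneg] at h
      linarith
    have heq : d₂ j * s j - lam * (d₄ j * s j)
        = (lam * (θ j * γ j) - κ j * τ j) * s j ^ 2 / (γ j * κ j) := by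
      rw [hd2, hd4]; field_simp; ring
    rw [heq]
    apply div_nonneg (mul_nonneg (by linarith) (sq_nonneg _))
    exact le_of_lt (mul_pos_of_neg_of_neg (hγ j) (hκ j))
  have hterm' : ∀ j, 0 ≤ d₃ j * t j := by
    intro j
    have hβ0 : β j ≠ 0 := ne_of_lt (hβ j)
    have e3 : α j * t j + β j * d₃ j = 0 := h3 j
    have hd3 : d₃ j = (-(α j * t j)) / β j := by rw [eq_div_iff hβ0]; linarith
    have heq : d₃ j * t j = α j * t j ^ 2 / (-(β j)) := by
      rw [hd3, div_neg, ← neg_div]; ring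
    rw [heq]
    exact div_nonneg (mul_nonneg (le_of_lt (hα j)) (sq_nonneg _))
      (le_of_lt (neg_pos.mpr (hβ j)))
  have hQ : dotProduct (H.mulVec d₁) d₁ ≤ 0 := by
    have hsum : 0 ≤ ∑ j, (d₂ j * s j - lam * (d₄ j * s j)) :=
      Finset.sum_nonneg fun j _ => hterm j
    have hsum' : 0 ≤ ∑ j, d₃ j * t j := Finset.sum_nonneg fun j _ => hterm' j
    have hdist : ∑ j, (d₂ j * s j - lam * (d₄ j * s j))
        = ∑ j, d₂ j * s j - lam * ∑ j, d₄ j * s j := by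
      rw [Finset.sum_sub_distrib, Finset.mul_sum]
    rw [hdist] at hsum
    linarith [key]
  have hd1 : d₁ = 0 := by
    by_contra hne
    have hpos : 0 < dotProduct d₁ (H.mulVec d₁) := by simpa using hH.dotProduct_mulVec_pos hne
    rw [dotProduct_comm] at hpos
    linarith
  have hs0 : ∀ j, s j = 0 := by intro j; simp [hs, hd1]
  have ht0 : ∀ j, t j = 0 := by intro j; simp [ht, hd1]
  refine ⟨hd1, ?_, ?_, ?_⟩
  · funext j
    have e2 : τ j * s j + γ j * d₂ j = 0 := h2 j
    rw [hs0 j] at e2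
    have : γ j * d₂ j = 0 := by linarith
    exact (mul_eq_zero.mp this).resolve_left (ne_of_lt (hγ j))
  · funext j
    have e3 : α j * t j + β j * d₃ j = 0 := h3 j
    rw [ht0 j] at e3
    have : β j * d₃ j = 0 := by linarith
    exact (mul_eq_zero.mp this).resolve_left (ne_of_lt (hβ j))
  · funext j
    have e4 : θ j * s j + κ j * d₄ j = 0 := h4 j
    rw [hs0 j] at e4
    have : κ j * d₄ j = 0 := by linarith
    exact (mul_eq_zero.mp this).resolve_left (ne_of_lt (hκ j))
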